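/- For the error ball B^edit, there exist real constants c1, c2 and an even integer n0 such that for every even n ≥ n0 and each N ∈ {1,2}, (3/2)·log2 n + c1 ≤ ρ_b(n,N;B^edit) ≤ (3/2)·log2 n + c2. -/

import Mathlib

namespace BRC

/-- Hamming distance between two binary words (of the same length). -/
def hammingDist (x y : List Bool) : ℕ :=
  (List.zip x y).countP (fun p => p.1 != p.2)

/-- `balanced n` is the set `U_n` of binary words of length `n` with exactly `n/2` ones. -/
def balanced (n : ℕ) : Set (List Bool) :=
  {x | x.length = n ∧ x.count true = n / 2}

/-- `B^S(x)`: words obtained from `x` by at most one substitution. -/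
def BS (x : List Bool) : Set (List Bool) :=
  {y | y.length = x.length ∧ hammingDist x y ≤ 1}

/-- `B^D(x)`: words obtained from `x` by deleting one symbol. -/
def BD (x : List Bool) : Set (List Bool) :=
  {y | ∃ (u v : List Bool) (b : Bool), x = u ++ b :: v ∧ y = u ++ v}

/-- `B^I(x)`: words obtained from `x` by inserting one symbol. -/
def BI (x : List Bool) : Set (List Bool) :=
  {y | ∃ (u v : List Bool) (b : Bool), x = u ++ v ∧ y = u ++ b :: v}

def BDI (x : List Bool) : Set (List Bool) := BD x ∪ BI x
def BSD (x : List Bool) : Set (List Bool) := BS x ∪ BD x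
def BSI (x : List Bool) : Set (List Bool) := BS x ∪ BI x
def Bedit (x : List Bool) : Set (List Bool) := BS x ∪ BD x ∪ BI x

/-- `C` is a balanced `(n,N;B)`-reconstruction code: `C ⊆ U_n` and `ν(C;B) < N`. -/
def reconCode (n N : ℕ) (B : List Bool → Set (List Bool)) (C : Set (List Bool)) : Prop :=
  C ⊆ balanced n ∧ ∀ x ∈ C, ∀ y ∈ C, x ≠ y → (B x ∩ B y).ncard < N

/-- `ρ_b(n,N;B)`: optimal redundancy of a balanced `(n,N;B)`-reconstruction code. -/
noncomputable def rho (n N : ℕ) (B : List Bool → Set (List Bool)) : ℝ :=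
  sInf {r : ℝ | ∃ C : Set (List Bool),
    reconCode n N B C ∧ r = (n : ℝ) - Real.logb 2 (C.ncard : ℝ)}

/-- `(10)^m`. -/
def pat10 (m : ℕ) : List Bool := (List.replicate m [true, false]).flatten
/-- `(01)^m`. -/
def pat01 (m : ℕ) : List Bool := (List.replicate m [false, true]).flatten

/-- Type-A-confusable with parameter `m`: `{c, c'} = {(10)^m, (01)^m}`. -/
def TypeAWith (m : ℕ) (x y : List Bool) : Prop :=
  ∃ u v : List Bool,
    (x = u ++ pat10 m ++ v ∧ y = u ++ pat01 m ++ v) ∨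
    (x = u ++ pat01 m ++ v ∧ y = u ++ pat10 m ++ v)

/-- Type-A-confusable (with some `m ≥ 1`). -/
def TypeA (x y : List Bool) : Prop := ∃ m, 1 ≤ m ∧ TypeAWith m x y

/-- Type-B-confusable with parameter `m`:
`{c, c'} = {0 1^m, 1^m 0}` or `{c, c'} = {1 0^m, 0^m 1}`. -/
def TypeBWith (m : ℕ) (x y : List Bool) : Prop :=
  ∃ u v : List Bool,
    ((x = u ++ (false :: List.replicate m true) ++ v ∧
        y = u ++ (List.replicate m true ++ [false]) ++ v) ∨
     (x = u ++ (List.replicate m true ++ [false]) ++ v ∧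
        y = u ++ (false :: List.replicate m true) ++ v)) ∨
    ((x = u ++ (true :: List.replicate m false) ++ v ∧
        y = u ++ (List.replicate m false ++ [true]) ++ v) ∨
     (x = u ++ (List.replicate m false ++ [true]) ++ v ∧
        y = u ++ (true :: List.replicate m false) ++ v))

/-- Type-B-confusable (with some `m ≥ 2`). -/
def TypeB (x y : List Bool) : Prop := ∃ m, 2 ≤ m ∧ TypeBWith m x y

/-- Number of runs of a binary word. -/
def numRuns (x : List Bool) : ℕ := (x.destutter (· ≠ ·)).length

/-- `V_{n-1}`: binary words of length `n-1` with Hamming weight `n/2` or `n/2 - 1`. -/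
def Vset (n : ℕ) : Set (List Bool) :=
  {x | x.length = n - 1 ∧ (x.count true = n / 2 ∨ x.count true = n / 2 - 1)}

/-- VT weighted sum `Σ_{i=1}^n i·x_i` (positions indexed from 1). -/
def vtSum (x : List Bool) : ℕ :=
  (x.zipIdx.map (fun p => if p.1 then p.2 + 1 else 0)).sum

/-- The balanced Varshamov–Tenengolts code `BVT_a(n)`. -/
def BVT (n a : ℕ) : Set (List Bool) :=
  {x | x ∈ balanced n ∧ vtSum x ≡ a [MOD n + 1]}

/-- `R_2^b(n,1,m)`: balanced words of length `n` all of whose runs have length at most `m`. -/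
def R1 (n m : ℕ) : Set (List Bool) :=
  {x | x ∈ balanced n ∧ ∀ b : Bool, ¬ (List.replicate (m + 1) b <:+: x)}


-- Part A: Hamming distance basics

lemma hd_cons (a b : Bool) (x y : List Bool) :
    hammingDist (a :: x) (b :: y) = (if a = b then 0 else 1) + hammingDist x y := by
  simp [hammingDist, List.countP_cons]
  cases a <;> cases b <;> simp [Nat.add_comm]

lemma hd_self (x : List Bool) : hammingDist x x = 0 := by
  induction x with
  | nil => rfl
  | cons a t ih => rw [hd_cons]; simp [ih]

lemma hd_symm (x y : List Bool) : hammingDist x y = hammingDist y x := by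
  induction x generalizing y with
  | nil => cases y <;> rfl
  | cons a t ih =>
    cases y with
    | nil => rfl
    | cons b s => rw [hd_cons, hd_cons, ih]; congr 1; by_cases h : a = b <;> simp [h, Ne.symm, eq_comm]

lemma hd_nil_right (x : List Bool) : hammingDist x [] = 0 := by
  cases x <;> rfl

lemma hd_triangle (x y z : List Bool) (hxy : x.length = y.length) (hyz : y.length = z.length) :
    hammingDist x z ≤ hammingDist x y + hammingDist y z := by
  induction x generalizing y z with
  | nil => simp [hammingDist]
  | cons a t ih =>
    cases y with
    | nil => simp at hxy
    | cons b s =>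
      cases z with
      | nil => simp at hyz
      | cons c w =>
        simp only [List.length_cons, Nat.succ.injEq] at hxy hyz
        rw [hd_cons, hd_cons, hd_cons]
        have := ih s w hxy hyz
        by_cases hab : a = b <;> by_cases hbc : b = c <;>
          by_cases hac : a = c <;> simp [hab, hbc, hac] <;> omega

lemma hd_zero_iff {x y : List Bool} (h : x.length = y.length) :
    hammingDist x y = 0 ↔ x = y := by
  induction x generalizing y with
  | nil =>
    cases y with
    | nil => simp [hammingDist]
    | cons b s => simp at h
  | cons a t ih =>
    cases y with
    | nil => simp at h
    | cons b s =>
      rw [hd_cons]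
      simp only [List.length_cons, Nat.succ.injEq] at h
      constructor
      · intro hz
        by_cases hab : a = b
        · simp [hab] at hz ⊢
          exact (ih h).mp hz
        · simp [hab] at hz
      · intro he
        obtain ⟨rfl, rfl⟩ : a = b ∧ t = s := by simpa using he
        simp [hd_self]

/-- decomposition of a positive Hamming distance at the first differing position -/
lemma hd_pos_decomp {x y : List Bool} (h : x.length = y.length) {k : ℕ}
    (hd : hammingDist x y = k + 1) :
    ∃ (u : List Bool) (b : Bool) (v w : List Bool),
      x = u ++ b :: v ∧ y = u ++ (!b) :: w ∧ v.length = w.length ∧ hammingDist v w = k := by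
  induction x generalizing y with
  | nil => cases y <;> simp [hammingDist] at hd h
  | cons a t ih =>
    cases y with
    | nil => simp at h
    | cons b s =>
      simp only [List.length_cons, Nat.succ.injEq] at h
      rw [hd_cons] at hd
      by_cases hab : a = b
      · simp [hab] at hd
        obtain ⟨u, c, v, w, hx, hy, hlen, hhd⟩ := ih h hd
        exact ⟨b :: u, c, v, w, by simp [hx, hab], by simp [hy], hlen, hhd⟩
      · simp [hab] at hd
        refine ⟨[], a, t, s, rfl, ?_, h, by omega⟩
        have : b = !a := by cases a <;> cases b <;> simp_all
        simp [this]

lemma count_true_append (u v : List Bool) :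
    (u ++ v).count true = u.count true + v.count true := List.count_append

/-- counts of words at Hamming distance one differ by one -/
lemma hd_one_count {x y : List Bool} (h : x.length = y.length)
    (hd : hammingDist x y = 1) :
    (x.count true = y.count true + 1) ∨ (y.count true = x.count true + 1) := by
  obtain ⟨u, b, v, w, hx, hy, hlen, hhd⟩ := hd_pos_decomp h hd
  have hvw : v = w := (hd_zero_iff hlen).mp hhd
  subst hvw
  subst hx; subst hy
  cases b <;> simp [count_true_append, List.count_cons] <;> omega
-- Part B: vtSum

private def vtAux (k : ℕ) (t : List Bool) : ℕ :=
  ((List.zipIdx t k).map (fun p => if p.1 then p.2 + 1 else 0)).sum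

private lemma vtAux_cons (k : ℕ) (a : Bool) (t : List Bool) :
    vtAux k (a :: t) = (if a then k + 1 else 0) + vtAux (k + 1) t := by
  simp [vtAux, List.zipIdx_cons]

private lemma vtAux_succ (t : List Bool) : ∀ k, vtAux (k + 1) t = vtAux k t + t.count true := by
  induction t with
  | nil => intro k; simp [vtAux]
  | cons a s ih =>
    intro k
    rw [vtAux_cons, vtAux_cons, ih (k + 1), List.count_cons]
    cases a <;> simp <;> omega

lemma vtSum_eq_vtAux (t : List Bool) : vtSum t = vtAux 0 t := by
  simp [vtSum, vtAux]

lemma vtSum_cons (b : Bool) (t : List Bool) :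
    vtSum (b :: t) = (if b then 1 else 0) + vtSum t + t.count true := by
  rw [vtSum_eq_vtAux, vtAux_cons, vtAux_succ, ← vtSum_eq_vtAux]
  cases b <;> simp <;> omega

lemma vtSum_insert (u v : List Bool) (b : Bool) :
    vtSum (u ++ b :: v) = vtSum (u ++ v) + (if b then u.length + 1 else 0) + v.count true := by
  induction u with
  | nil => simp [vtSum_cons]; cases b <;> simp [Nat.add_comm]
  | cons c u' ih =>
    simp only [List.cons_append, vtSum_cons, ih, count_true_append, List.count_cons,
      List.length_cons]
    cases b <;> cases c <;> simp <;> omega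
-- Part C: VT codes correct one deletion and one insertion

lemma split_common {u v p q : List Bool} (h : u ++ v = p ++ q) (hle : u.length ≤ p.length) :
    ∃ s, p = u ++ s ∧ v = s ++ q := by
  rcases List.append_eq_append_iff.mp h with ⟨s, hs1, hs2⟩ | ⟨s, hs1, hs2⟩
  · exact ⟨s, hs1, hs2⟩
  · have hnil : s = [] := by
      have := congrArg List.length hs1
      simp at this
      exact List.eq_nil_of_length_eq_zero (by omega)
    subst hnil
    simp at hs1 hs2
    exact ⟨[], by simp [hs1], by simp [hs2]⟩

lemma count_eq_length_replicate {s : List Bool} (h : s.count true = s.length) :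
    s = List.replicate s.length true := by
  rw [List.eq_replicate_iff]
  exact ⟨rfl, fun b hb => (List.count_eq_length.mp h b hb).symm⟩

lemma count_zero_replicate {s : List Bool} (h : s.count true = 0) :
    s = List.replicate s.length false := by
  rw [List.eq_replicate_iff]
  refine ⟨rfl, fun b hb => ?_⟩
  have := List.count_eq_zero.mp h
  cases b
  · rfl
  · exact absurd hb this

/-- helper for VT deletion-correction, with WLOG ordering -/
lemma vt_del_aux {n : ℕ} {u v p q : List Bool} {a b : Bool}
    (hlen : u.length + v.length + 1 = n)
    (hz : u ++ v = p ++ q)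
    (hle : u.length ≤ p.length)
    (hmod : vtSum (u ++ a :: v) ≡ vtSum (p ++ b :: q) [MOD n + 1]) :
    u ++ a :: v = p ++ b :: q := by
  obtain ⟨s, rfl, rfl⟩ := split_common hz hle
  rw [vtSum_insert, vtSum_insert] at hmod
  rw [show u ++ s ++ q = u ++ (s ++ q) by simp] at hmod
  have hcancel : (if a then u.length + 1 else 0) + (s ++ q).count true
      ≡ (if b then (u ++ s).length + 1 else 0) + q.count true [MOD n + 1] := by
    have h' : vtSum (u ++ (s ++ q)) + ((if a then u.length + 1 else 0) + (s ++ q).count true)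
        ≡ vtSum (u ++ (s ++ q)) + ((if b then (u ++ s).length + 1 else 0) + q.count true)
          [MOD n + 1] := by
      calc vtSum (u ++ (s ++ q)) + ((if a then u.length + 1 else 0) + (s ++ q).count true)
          = vtSum (u ++ (s ++ q)) + (if a then u.length + 1 else 0) + (s ++ q).count true := by ring
        _ ≡ vtSum (u ++ (s ++ q)) + (if b then (u ++ s).length + 1 else 0) + q.count true
            [MOD n + 1] := hmod
        _ = vtSum (u ++ (s ++ q)) + ((if b then (u ++ s).length + 1 else 0) + q.count true) := by
            ring
    exact Nat.ModEq.add_left_cancel' _ h'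
  have hlens : u.length + (s.length + q.length) + 1 = n := by simp at hlen; omega
  have hcntq : q.count true ≤ q.length := List.count_le_length
  have hcnts : s.count true ≤ s.length := List.count_le_length
  have hA1 : (if a then u.length + 1 else 0) + (s ++ q).count true < n + 1 := by
    rw [count_true_append]
    cases a <;> simp <;> omega
  have hA2 : (if b then (u ++ s).length + 1 else 0) + q.count true < n + 1 := by
    simp only [List.length_append]
    cases b <;> simp <;> omega
  have heq : (if a then u.length + 1 else 0) + (s ++ q).count true
      = (if b then (u ++ s).length + 1 else 0) + q.count true := by
    have h2 := hcancel
    unfold Nat.ModEq at h2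
    rwa [Nat.mod_eq_of_lt hA1, Nat.mod_eq_of_lt hA2] at h2
  rw [count_true_append] at heq
  simp only [List.length_append] at heq
  cases a <;> cases b <;> simp at heq
  · -- a = false, b = false : s all false
    have hs : s = List.replicate s.length false := count_zero_replicate (by omega)
    rw [hs]
    simp only [List.append_assoc]
    congr 1
    rw [show (false :: (List.replicate s.length false ++ q))
        = (List.replicate (s.length+1) false ++ q) by simp [List.replicate_succ]]
    rw [show (List.replicate s.length false ++ false :: q)
        = (List.replicate (s.length+1) false ++ q) by simp [List.replicate_succ']]
  · -- a = false, b = true: impossible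
    omega
  · -- a = true, b = false: impossible
    omega
  · -- a = true, b = true : s all true
    have hs : s = List.replicate s.length true := count_eq_length_replicate (by omega)
    rw [hs]
    simp only [List.append_assoc]
    congr 1
    rw [show (true :: (List.replicate s.length true ++ q))
        = (List.replicate (s.length+1) true ++ q) by simp [List.replicate_succ]]
    rw [show (List.replicate s.length true ++ true :: q)
        = (List.replicate (s.length+1) true ++ q) by simp [List.replicate_succ']]

/-- VT-congruent words with a common one-deletion subword are equal. -/
lemma vt_del {n : ℕ} {x y : List Bool} (hx : x.length = n)
    (hmod : vtSum x ≡ vtSum y [MOD n + 1]) {z : List Bool}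
    (hzx : z ∈ BD x) (hzy : z ∈ BD y) : x = y := by
  obtain ⟨u, v, a, rfl, rfl⟩ := hzx
  obtain ⟨p, q, b, rfl, hz⟩ := hzy
  have hlen : u.length + v.length + 1 = n := by simp at hx; omega
  rcases le_total u.length p.length with hle | hle
  · exact vt_del_aux hlen hz hle hmod
  · exact (vt_del_aux (by
      have := congrArg List.length hz
      simp at this ⊢
      omega) hz.symm hle hmod.symm).symm

private lemma common_sup_aux {u v p q : List Bool} {a b : Bool}
    (hz : u ++ a :: v = p ++ b :: q) (hle : u.length ≤ p.length) :
    u ++ v = p ++ q ∨ ∃ w, w ∈ BD (u ++ v) ∧ w ∈ BD (p ++ q) := by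
  rcases Nat.eq_or_lt_of_le hle with heq | hlt
  · left
    obtain ⟨s, hs1, hs2⟩ := split_common hz hle
    have hnil : s = [] := by
      have := congrArg List.length hs1
      simp at this
      exact List.eq_nil_of_length_eq_zero (by omega)
    subst hnil
    simp at hs1
    subst hs1
    obtain ⟨rfl, rfl⟩ : a = b ∧ v = q := by simpa using hs2
    rfl
  · right
    obtain ⟨s, hs1, hs2⟩ := split_common hz hle
    cases s with
    | nil =>
      exfalso
      have := congrArg List.length hs1
      simp at this
      omega
    | cons c s' =>
      obtain ⟨rfl, rfl⟩ : a = c ∧ v = s' ++ b :: q := by simpa using hs2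
      refine ⟨u ++ s' ++ q, ⟨u ++ s', q, b, by simp, by simp⟩, ?_⟩
      rw [hs1]
      exact ⟨u, s' ++ q, a, by simp, by simp⟩

/-- common one-insertion superword implies equality or a common one-deletion subword. -/
lemma common_sup_to_sub {x y z : List Bool} (hzx : z ∈ BI x) (hzy : z ∈ BI y) :
    x = y ∨ ∃ w, w ∈ BD x ∧ w ∈ BD y := by
  obtain ⟨u, v, a, rfl, hz1⟩ := hzx
  obtain ⟨p, q, b, rfl, hz2⟩ := hzy
  have hz : u ++ a :: v = p ++ b :: q := by rw [← hz1, ← hz2]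
  rcases le_total u.length p.length with hle | hle
  · exact common_sup_aux hz hle
  · rcases common_sup_aux hz.symm hle with h | ⟨w, h1, h2⟩
    · exact Or.inl h.symm
    · exact Or.inr ⟨w, h2, h1⟩
lemma modeq_bounded {m A B : ℕ} (h : A ≡ B [MOD m]) (h1 : A < B) (h2 : B < A + m) : False := by
  have hd := (Nat.modEq_iff_dvd' h1.le).mp h
  have := Nat.le_of_dvd (by omega) hd
  omega

-- Part D: substitution-ball disjointness for balanced VT words

lemma vtSum_two_insert (u p r : List Bool) (b c : Bool) :
    vtSum (u ++ b :: (p ++ c :: r)) = vtSum (u ++ (p ++ r))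
      + (if b then u.length + 1 else 0) + (if c then u.length + p.length + 2 else 0)
      + p.count true + 2 * r.count true := by
  rw [vtSum_insert u (p ++ c :: r) b]
  rw [show u ++ (p ++ c :: r) = (u ++ p) ++ c :: r by simp]
  rw [vtSum_insert (u ++ p) r c]
  rw [show (u ++ p) ++ r = u ++ (p ++ r) by simp]
  simp only [count_true_append, List.count_cons, List.length_append]
  cases b <;> cases c <;> simp <;> omega

lemma vt_sub {n : ℕ} {x y : List Bool} (hx : x.length = n) (hy : y.length = n)
    (hcnt : x.count true = y.count true)
    (hmod : vtSum x ≡ vtSum y [MOD n + 1]) {z : List Bool}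
    (hzx : z ∈ BS x) (hzy : z ∈ BS y) : x = y := by
  obtain ⟨hlzx, hdx⟩ := hzx
  obtain ⟨hlzy, hdy⟩ := hzy
  have hlxy : x.length = y.length := by omega
  have htri : hammingDist x y ≤ 2 := by
    have h1 := hd_triangle x z y (hlzx.symm) (by omega)
    have h2 : hammingDist z y = hammingDist y z := hd_symm _ _
    omega
  interval_cases h : hammingDist x y
  · exact (hd_zero_iff hlxy).mp h
  · -- distance 1: contradicts equal counts
    rcases hd_one_count hlxy h with h1 | h1 <;> omega
  · -- distance 2
    obtain ⟨u, b, v, w, rfl, rfl, hlvw, hdvw⟩ := hd_pos_decomp hlxy h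
    obtain ⟨p, c, r, r', rfl, rfl, hlrr, hdrr⟩ := hd_pos_decomp hlvw hdvw
    have hrr : r = r' := (hd_zero_iff hlrr).mp hdrr
    subst hrr
    -- counts force c = !b
    have hcb : c = !b := by
      simp only [count_true_append, List.count_cons] at hcnt
      cases b <;> cases c <;> simp at hcnt ⊢ <;> omega
    subst hcb
    exfalso
    rw [vtSum_two_insert, vtSum_two_insert] at hmod
    have hlen : u.length + p.length + r.length + 2 = n := by
      simp at hx; omega
    cases b <;> simp at hmod
    · exact modeq_bounded hmod.symm (by omega) (by omega)
    · exact modeq_bounded hmod (by omega) (by omega)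
-- Part E: Bedit disjointness

lemma BS_length {x z : List Bool} (h : z ∈ BS x) : z.length = x.length := h.1

lemma BD_length {x z : List Bool} (h : z ∈ BD x) : z.length + 1 = x.length := by
  obtain ⟨u, v, b, rfl, rfl⟩ := h; simp; omega

lemma BI_length {x z : List Bool} (h : z ∈ BI x) : z.length = x.length + 1 := by
  obtain ⟨u, v, b, rfl, rfl⟩ := h; simp; omega

lemma bvt_pair_disjoint {n : ℕ} {x y : List Bool}
    (hx : x ∈ balanced n) (hy : y ∈ balanced n)
    (hmod : vtSum x ≡ vtSum y [MOD n + 1]) (hne : x ≠ y) :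
    Bedit x ∩ Bedit y = ∅ := by
  obtain ⟨hxl, hxc⟩ := hx
  obtain ⟨hyl, hyc⟩ := hy
  ext z
  simp only [Set.mem_inter_iff, Set.mem_empty_iff_false, iff_false, not_and]
  intro hzx hzy
  apply hne
  rcases hzx with (hzx | hzx) | hzx <;> rcases hzy with (hzy | hzy) | hzy
  · exact vt_sub hxl hyl (by rw [hxc, hyc]) hmod hzx hzy
  · have := BS_length hzx; have := BD_length hzy; omega
  · have := BS_length hzx; have := BI_length hzy; omega
  · have := BD_length hzx; have := BS_length hzy; omega
  · exact vt_del hxl hmod hzx hzy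
  · have := BD_length hzx; have := BI_length hzy; omega
  · have := BI_length hzx; have := BS_length hzy; omega
  · have := BI_length hzx; have := BD_length hzy; omega
  · rcases common_sup_to_sub hzx hzy with h | ⟨w, h1, h2⟩
    · exact h
    · exact vt_del hxl hmod h1 h2
-- Part F: counting words with given length and weight

def Swords (n k : ℕ) : Set (List Bool) := {l | l.length = n ∧ l.count true = k}

lemma Swords_finite (n k : ℕ) : (Swords n k).Finite :=
  (List.finite_length_eq Bool n).subset (fun _ h => h.1)

lemma balanced_eq_Swords (n : ℕ) : balanced n = Swords n (n / 2) := rfl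

lemma Swords_zero (k : ℕ) : Swords 0 k = if k = 0 then {([] : List Bool)} else ∅ := by
  ext l
  cases l with
  | nil => by_cases h : k = 0 <;> simp [Swords, h] <;> omega
  | cons b t => by_cases h : k = 0 <;> simp [Swords, h]

lemma Swords_succ (n k : ℕ) :
    Swords (n + 1) k = (fun l => false :: l) '' Swords n k
      ∪ (fun l => true :: l) '' (if k = 0 then ∅ else Swords n (k - 1)) := by
  ext l
  cases l with
  | nil => by_cases h : k = 0 <;> simp [Swords, h]
  | cons b t =>
    cases b
    · by_cases h : k = 0 <;> simp [Swords, h, List.count_cons]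
    · by_cases h : k = 0 <;> simp [Swords, h, List.count_cons] <;> omega

lemma Swords_ncard (n k : ℕ) : (Swords n k).ncard = n.choose k := by
  induction n generalizing k with
  | zero =>
    rw [Swords_zero]
    by_cases h : k = 0
    · subst h; simp
    · simp [h, Nat.choose_eq_zero_of_lt (show 0 < k by omega)]
  | succ n ih =>
    rw [Swords_succ]
    have hinj : ∀ b : Bool, Function.Injective (fun l : List Bool => b :: l) :=
      fun b l1 l2 h => by simpa using h
    have hdisj : Disjoint ((fun l => false :: l) '' Swords n k)
        ((fun l => true :: l) '' (if k = 0 then ∅ else Swords n (k - 1))) := by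
      rw [Set.disjoint_iff_inter_eq_empty]
      ext l
      simp only [Set.mem_inter_iff, Set.mem_image, Set.mem_empty_iff_false, iff_false, not_and]
      rintro ⟨a, _, rfl⟩ ⟨c, _, hc⟩
      simp at hc
    rw [Set.ncard_union_eq hdisj
      ((Swords_finite n k).image _)
      (by
        by_cases h : k = 0
        · simp [h]
        · simp only [h, if_false]; exact (Swords_finite n (k-1)).image _),
      Set.ncard_image_of_injective _ (hinj false),
      Set.ncard_image_of_injective _ (hinj true)]
    by_cases h : k = 0
    · simp [h, ih]
    · simp only [h, if_false]
      rw [ih k, ih (k - 1)]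
      obtain ⟨k', rfl⟩ : ∃ k', k = k' + 1 := ⟨k - 1, by omega⟩
      simp only [Nat.add_sub_cancel]
      rw [Nat.choose_succ_succ]
      simp [Nat.succ_eq_add_one]
      omega

lemma choose_le_two_pow (n k : ℕ) : n.choose k ≤ 2 ^ n := by
  by_cases h : k ≤ n
  · calc n.choose k ≤ ∑ i ∈ Finset.range (n + 1), n.choose i :=
        Finset.single_le_sum (f := fun i => n.choose i) (fun _ _ => Nat.zero_le _)
          (Finset.mem_range.mpr (by omega))
    _ = 2 ^ n := Nat.sum_range_choose n
  · rw [Nat.choose_eq_zero_of_lt (by omega)]; exact Nat.zero_le _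
-- Part G: packing lower bound

def flipAt (x : List Bool) (i : ℕ) : List Bool := x.set i (!(x.getD i false))

lemma flipAt_length (x : List Bool) (i : ℕ) : (flipAt x i).length = x.length := by
  simp [flipAt]

lemma hd_set {x : List Bool} : ∀ {i : ℕ}, i < x.length →
    hammingDist x (x.set i (!(x.getD i false))) = 1 := by
  induction x with
  | nil => intro i hi; simp at hi
  | cons a t ih =>
    intro i hi
    cases i with
    | zero => simp [List.set, hd_cons, hd_self]
    | succ i =>
      simp only [List.length_cons] at hi
      have h1 := ih (i := i) (by omega)
      simp only [List.set, hd_cons, List.getD_cons_succ, if_pos rfl]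
      simp only [List.getD_eq_getElem?_getD] at h1
      simp [h1]

lemma hd_flipAt {x : List Bool} {i : ℕ} (hi : i < x.length) :
    hammingDist x (flipAt x i) = 1 := hd_set hi

lemma flipAt_getElem?_self {x : List Bool} {i : ℕ} (hi : i < x.length) :
    (flipAt x i)[i]? = some (!(x[i]'hi)) := by
  have hi' : i < (flipAt x i).length := by rw [flipAt_length]; exact hi
  rw [List.getElem?_eq_getElem hi']
  simp [flipAt, List.getElem_set, List.getD_eq_getElem?_getD, List.getElem?_eq_getElem hi]

lemma flipAt_getElem?_ne {x : List Bool} {i j : ℕ} (hj : j < x.length) (hij : i ≠ j) :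
    (flipAt x i)[j]? = some (x[j]'hj) := by
  have hj' : j < (flipAt x i).length := by rw [flipAt_length]; exact hj
  rw [List.getElem?_eq_getElem hj']
  simp [flipAt, List.getElem_set, hij]

lemma flipAt_ne_self {x : List Bool} {i : ℕ} (hi : i < x.length) : flipAt x i ≠ x := by
  intro h
  have h2 := congrArg (fun l : List Bool => l[i]?) h
  rw [flipAt_getElem?_self hi, List.getElem?_eq_getElem hi] at h2
  exact absurd (Option.some_injective _ h2) (by cases x[i]'hi <;> simp)

lemma flipAt_injOn {x : List Bool} {i j : ℕ} (hi : i < x.length) (hj : j < x.length)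
    (h : flipAt x i = flipAt x j) : i = j := by
  by_contra hij
  have h2 := congrArg (fun l : List Bool => l[i]?) h
  rw [flipAt_getElem?_self hi, flipAt_getElem?_ne (i := j) hi (Ne.symm hij)] at h2
  exact absurd (Option.some_injective _ h2) (by cases x[i]'hi <;> simp)
-- Part H: minimum distance and sphere packing

lemma hd_append_left (u s t : List Bool) :
    hammingDist (u ++ s) (u ++ t) = hammingDist s t := by
  induction u with
  | nil => rfl
  | cons a w ih => simp [hd_cons, ih]

lemma Bedit_finite (x : List Bool) : (Bedit x).Finite := by
  have h1 : BS x ⊆ {l | l.length = x.length} := fun z hz => hz.1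
  have h2 : BD x ⊆ {l | l.length + 1 = x.length} := fun z hz => BD_length hz
  have h3 : BI x ⊆ {l | l.length = x.length + 1} := fun z hz => BI_length hz
  have f2 : {l : List Bool | l.length + 1 = x.length}.Finite := by
    apply (List.finite_length_eq Bool (x.length - 1)).subset
    intro l hl
    simp at hl ⊢
    omega
  exact (((List.finite_length_eq Bool x.length).subset h1).union
    (f2.subset h2)).union ((List.finite_length_eq Bool (x.length + 1)).subset h3)

/-- reconstruction codes for `Bedit` with `N ≤ 2` have minimum Hamming distance 3 -/
lemma recon_mindist {n N : ℕ} (hN : N ≤ 2) {C : Set (List Bool)}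
    (hC : reconCode n N Bedit C) {x y : List Bool} (hx : x ∈ C) (hy : y ∈ C)
    (hne : x ≠ y) : ¬ hammingDist x y ≤ 2 := by
  intro hd2
  obtain ⟨hxl, _⟩ := hC.1 hx
  obtain ⟨hyl, _⟩ := hC.1 hy
  have hlen : x.length = y.length := by omega
  have hsub : ∀ z1 z2 : List Bool, z1 ≠ z2 → z1 ∈ BS x → z1 ∈ BS y → z2 ∈ BS x → z2 ∈ BS y →
      False := by
    intro z1 z2 h12 ha hb hc hd
    have hpair : ({z1, z2} : Set (List Bool)) ⊆ Bedit x ∩ Bedit y := by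
      intro z hz
      rcases hz with rfl | hz
      · exact ⟨Or.inl (Or.inl ha), Or.inl (Or.inl hb)⟩
      · rcases hz with rfl
        exact ⟨Or.inl (Or.inl hc), Or.inl (Or.inl hd)⟩
    have h2 : 2 ≤ (Bedit x ∩ Bedit y).ncard := by
      rw [← Set.ncard_pair h12]
      exact Set.ncard_le_ncard hpair ((Bedit_finite x).inter_of_left _)
    have := hC.2 x hx y hy hne
    omega
  interval_cases h : hammingDist x y
  · exact hne ((hd_zero_iff hlen).mp h)
  · -- distance 1 : x and y themselves
    exact hsub x y hne ⟨rfl, by simp [hd_self]⟩ ⟨hlen, by rw [hd_symm]; omega⟩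
      ⟨hlen.symm ▸ rfl, by omega⟩ ⟨rfl, by simp [hd_self]⟩
  · -- distance 2 : two midpoints
    obtain ⟨u, b, v, w, rfl, rfl, hlvw, hdvw⟩ := hd_pos_decomp hlen h
    have hz1x : (u ++ (!b) :: v) ∈ BS (u ++ b :: v) := by
      refine ⟨by simp, ?_⟩
      rw [hd_append_left, hd_cons, hd_self]
      cases b <;> simp
    have hz1y : (u ++ (!b) :: v) ∈ BS (u ++ (!b) :: w) := by
      refine ⟨by simp; omega, ?_⟩
      rw [hd_append_left, hd_cons, hd_symm]
      simp [hdvw]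
    have hz2x : (u ++ b :: w) ∈ BS (u ++ b :: v) := by
      refine ⟨by simp; omega, ?_⟩
      rw [hd_append_left, hd_cons]
      simp [hdvw]
    have hz2y : (u ++ b :: w) ∈ BS (u ++ (!b) :: w) := by
      refine ⟨by simp, ?_⟩
      rw [hd_append_left, hd_cons, hd_self]
      cases b <;> simp
    refine hsub _ _ ?_ hz1x hz1y hz2x hz2y
    intro hzz
    have := List.append_inj_right hzz rfl
    have hb := (List.cons.injEq _ _ _ _ ▸ this).1
    exact absurd hb (by cases b <;> simp)

lemma ballF_card {x : List Bool} {n : ℕ} (hxl : x.length = n) :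
    (insert x ((Finset.range n).image (flipAt x))).card = n + 1 := by
  have h1 : x ∉ (Finset.range n).image (flipAt x) := by
    simp only [Finset.mem_image, Finset.mem_range]
    rintro ⟨i, hi, h⟩
    exact flipAt_ne_self (show i < x.length by omega) h
  have h2 : ((Finset.range n).image (flipAt x)).card = n := by
    rw [Finset.card_image_of_injOn, Finset.card_range]
    intro i hi j hj hij
    simp only [Finset.coe_range, Set.mem_Iio] at hi hj
    exact flipAt_injOn (by omega) (by omega) hij
  rw [Finset.card_insert_of_notMem h1, h2]

/-- sphere-packing bound for `Bedit` reconstruction codes -/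
lemma packing_bound {n N : ℕ} (hn : 2 ≤ n) (hN : N ≤ 2) {C : Set (List Bool)}
    (hC : reconCode n N Bedit C) :
    (n + 1) * C.ncard ≤ 3 * n.choose (n / 2) := by
  have hCfin : C.Finite := (Swords_finite n (n / 2)).subset hC.1
  set Cf := hCfin.toFinset with hCf
  have hW : (Swords n (n/2-1) ∪ Swords n (n/2) ∪ Swords n (n/2+1)).Finite :=
    ((Swords_finite _ _).union (Swords_finite _ _)).union (Swords_finite _ _)
  set Wf := hW.toFinset with hWf
  set ballF : List Bool → Finset (List Bool) :=
    fun x => insert x ((Finset.range n).image (flipAt x)) with hballF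
  have hmem : ∀ x ∈ Cf, ∀ z ∈ ballF x, z.length = n ∧ hammingDist x z ≤ 1 := by
    intro x hx z hz
    have hxb : x ∈ balanced n := hC.1 (by rwa [hCf, Set.Finite.mem_toFinset] at hx)
    obtain ⟨hxl, hxc⟩ := hxb
    simp only [hballF, Finset.mem_insert, Finset.mem_image, Finset.mem_range] at hz
    rcases hz with rfl | ⟨i, hi, rfl⟩
    · exact ⟨hxl, by simp [hd_self]⟩
    · exact ⟨by rw [flipAt_length]; exact hxl,
        by rw [hd_flipAt (show i < x.length by rw [hxl]; exact hi)]⟩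
  have hsubW : ∀ x ∈ Cf, ballF x ⊆ Wf := by
    intro x hx z hz
    have hxb : x ∈ balanced n := hC.1 (by rwa [hCf, Set.Finite.mem_toFinset] at hx)
    obtain ⟨hxl, hxc⟩ := hxb
    obtain ⟨hzl, hzd⟩ := hmem x hx z hz
    rw [hWf, Set.Finite.mem_toFinset]
    interval_cases hdd : hammingDist x z
    · have : x = z := (hd_zero_iff (by omega)).mp hdd
      subst this
      exact Or.inl (Or.inr ⟨hxl, hxc⟩)
    · rcases hd_one_count (by omega) hdd with h1 | h1
      · exact Or.inl (Or.inl ⟨hzl, by omega⟩)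
      · exact Or.inr ⟨hzl, by omega⟩
  have hdisj : ∀ x ∈ Cf, ∀ y ∈ Cf, x ≠ y → Disjoint (ballF x) (ballF y) := by
    intro x hx y hy hne
    rw [Finset.disjoint_left]
    intro z hzx hzy
    obtain ⟨hzl, hdx⟩ := hmem x hx z hzx
    obtain ⟨hzl', hdy⟩ := hmem y hy z hzy
    obtain ⟨hxl, _⟩ := hC.1 (by rwa [hCf, Set.Finite.mem_toFinset] at hx)
    obtain ⟨hyl, _⟩ := hC.1 (by rwa [hCf, Set.Finite.mem_toFinset] at hy)
    refine recon_mindist hN hC (by rwa [hCf, Set.Finite.mem_toFinset] at hx)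
      (by rwa [hCf, Set.Finite.mem_toFinset] at hy) hne ?_
    have htri := hd_triangle x z y (by omega) (by omega)
    rw [hd_symm z y] at htri
    omega
  have hcard : ∀ x ∈ Cf, (ballF x).card = n + 1 := by
    intro x hx
    obtain ⟨hxl, _⟩ := hC.1 (by rwa [hCf, Set.Finite.mem_toFinset] at hx)
    exact ballF_card hxl
  have hbu : (Cf.biUnion ballF).card = ∑ x ∈ Cf, (ballF x).card :=
    Finset.card_biUnion hdisj
  have hle : (Cf.biUnion ballF).card ≤ Wf.card := by
    apply Finset.card_le_card
    intro z hz
    rw [Finset.mem_biUnion] at hz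
    obtain ⟨x, hx, hzx⟩ := hz
    exact hsubW x hx hzx
  have hsum : ∑ x ∈ Cf, (ballF x).card = (n + 1) * Cf.card := by
    rw [Finset.sum_congr rfl hcard]
    simp [Finset.sum_const, Nat.mul_comm]
  have hWcard : Wf.card ≤ 3 * n.choose (n / 2) := by
    rw [hWf, ← Set.ncard_eq_toFinset_card _ hW]
    calc (Swords n (n/2-1) ∪ Swords n (n/2) ∪ Swords n (n/2+1)).ncard
        ≤ (Swords n (n/2-1) ∪ Swords n (n/2)).ncard + (Swords n (n/2+1)).ncard :=
          Set.ncard_union_le _ _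
      _ ≤ (Swords n (n/2-1)).ncard + (Swords n (n/2)).ncard + (Swords n (n/2+1)).ncard := by
          have := Set.ncard_union_le (Swords n (n/2-1)) (Swords n (n/2))
          omega
      _ ≤ 3 * n.choose (n / 2) := by
          rw [Swords_ncard, Swords_ncard, Swords_ncard]
          have h1 := Nat.choose_le_middle (n/2-1) n
          have h2 := Nat.choose_le_middle (n/2+1) n
          omega
  calc (n + 1) * C.ncard = (n+1) * Cf.card := by rw [hCf, Set.ncard_eq_toFinset_card C hCfin]
    _ = ∑ x ∈ Cf, (ballF x).card := hsum.symm
    _ = (Cf.biUnion ballF).card := hbu.symm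
    _ ≤ Wf.card := hle
    _ ≤ 3 * n.choose (n / 2) := hWcard
-- Part I: central binomial bounds

lemma central_identity (m : ℕ) :
    (2*m+2).choose (m+1) * ((m+1)*(m+1)) = (2*m+2) * ((2*m+1) * ((2*m).choose m)) := by
  have h1 : (2*m+2) * (2*m+1).choose m = (2*m+2).choose (m+1) * (m+1) := by
    have := Nat.add_one_mul_choose_eq (2*m+1) m
    simpa [Nat.succ_eq_add_one] using this
  have h2 : (2*m+1) * (2*m).choose m = (2*m+1).choose (m+1) * (m+1) := by
    have := Nat.add_one_mul_choose_eq (2*m) m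
    simpa [Nat.succ_eq_add_one] using this
  have h3 : (2*m+1).choose m = (2*m+1).choose (m+1) := by
    have := Nat.choose_symm (n := 2*m+1) (k := m+1) (by omega)
    simpa [show 2*m+1-(m+1) = m by omega] using this
  calc (2*m+2).choose (m+1) * ((m+1)*(m+1))
      = ((2*m+2).choose (m+1) * (m+1)) * (m+1) := by ring
    _ = ((2*m+2) * (2*m+1).choose m) * (m+1) := by rw [h1]
    _ = ((2*m+2) * (2*m+1).choose (m+1)) * (m+1) := by rw [h3]
    _ = (2*m+2) * ((2*m+1).choose (m+1) * (m+1)) := by ring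
    _ = (2*m+2) * ((2*m+1) * ((2*m).choose m)) := by rw [← h2]

lemma central_lower : ∀ m : ℕ, 1 ≤ m → 16^m ≤ 4 * m * ((2*m).choose m)^2 := by
  intro m
  induction m with
  | zero => omega
  | succ m ih =>
    intro _
    by_cases hm : 1 ≤ m
    · have ihm := ih hm
      set c := (2*m).choose m with hc
      set c' := (2*m+2).choose (m+1) with hc'
      have idd : c' * ((m+1)*(m+1)) = (2*m+2) * ((2*m+1) * c) := central_identity m
      have goal4 : 16^(m+1) * (m+1)^4 ≤ 4 * (m+1) * c'^2 * (m+1)^4 := by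
        have h1 : 4*(m+1)*c'^2*(m+1)^4 = 4*(m+1)*((2*m+2) * ((2*m+1) * c))^2 := by
          rw [← idd]; ring
        rw [h1]
        have h2 : 16^(m+1)*(m+1)^4 = 16^m * (16*(m+1)^4) := by ring
        rw [h2]
        calc 16^m * (16*(m+1)^4) ≤ (4*m*c^2) * (16*(m+1)^4) :=
              Nat.mul_le_mul_right _ ihm
          _ = (4*m*(m+1)) * (16*(m+1)^3) * c^2 := by ring
          _ ≤ ((2*m+1)^2) * (16*(m+1)^3) * c^2 := by
              have : 4*m*(m+1) ≤ (2*m+1)^2 := by nlinarith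
              exact Nat.mul_le_mul_right _ (Nat.mul_le_mul_right _ this)
          _ = 4*(m+1)*((2*m+2) * ((2*m+1) * c))^2 := by ring
      have hpos : 0 < (m+1)^4 := by positivity
      calc 16^(m+1) = 16^(m+1) * (m+1)^4 / (m+1)^4 := by
            rw [Nat.mul_div_cancel _ hpos]
        _ ≤ 4 * (m+1) * c'^2 * (m+1)^4 / (m+1)^4 := Nat.div_le_div_right goal4
        _ = 4 * (m+1) * c'^2 := Nat.mul_div_cancel _ hpos
    · have hm0 : m = 0 := by omega
      subst hm0
      norm_num

lemma central_upper : ∀ m : ℕ, 1 ≤ m → (2*m+1) * ((2*m).choose m)^2 ≤ 16^m := by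
  intro m
  induction m with
  | zero => omega
  | succ m ih =>
    intro _
    by_cases hm : 1 ≤ m
    · have ihm := ih hm
      set c := (2*m).choose m with hc
      set c' := (2*m+2).choose (m+1) with hc'
      have idd : c' * ((m+1)*(m+1)) = (2*m+2) * ((2*m+1) * c) := central_identity m
      have goal4 : (2*(m+1)+1) * c'^2 * (m+1)^4 ≤ 16^(m+1) * (m+1)^4 := by
        have h1 : (2*(m+1)+1)*c'^2*(m+1)^4 = (2*m+3)*((2*m+2) * ((2*m+1) * c))^2 := by
          rw [← idd]; ring
        rw [h1]
        calc (2*m+3)*((2*m+2) * ((2*m+1) * c))^2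
            = ((2*m+3)*(2*m+1)*(2*m+2)^2) * ((2*m+1)*c^2) := by ring
          _ ≤ ((2*m+2)^2*(2*m+2)^2) * ((2*m+1)*c^2) := by
              have : (2*m+3)*(2*m+1) ≤ (2*m+2)^2 := by nlinarith
              exact Nat.mul_le_mul_right _ (Nat.mul_le_mul_right _ this)
          _ ≤ ((2*m+2)^2*(2*m+2)^2) * 16^m := Nat.mul_le_mul_left _ ihm
          _ = 16^(m+1) * (m+1)^4 := by ring
      have hpos : 0 < (m+1)^4 := by positivity
      exact Nat.le_of_mul_le_mul_right goal4 hpos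
    · have hm0 : m = 0 := by omega
      subst hm0
      norm_num
-- Part J: the balanced VT code is a reconstruction code, and one residue class is large

lemma bvt_recon (n N : ℕ) (hN : 1 ≤ N) (a : ℕ) : reconCode n N Bedit (BVT n a) := by
  constructor
  · exact fun x hx => hx.1
  · intro x hx y hy hne
    have hmod : vtSum x ≡ vtSum y [MOD n + 1] := hx.2.trans hy.2.symm
    rw [bvt_pair_disjoint hx.1 hy.1 hmod hne]
    simpa using (show 0 < N by omega)

lemma exists_bvt_large (n : ℕ) :
    ∃ a, n.choose (n / 2) ≤ (n + 1) * (BVT n a).ncard := by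
  have hUfin : (Swords n (n / 2)).Finite := Swords_finite n (n / 2)
  set Uf := hUfin.toFinset with hUf
  have hmaps : ∀ x ∈ Uf, vtSum x % (n + 1) ∈ Finset.range (n + 1) := by
    intro x _
    exact Finset.mem_range.mpr (Nat.mod_lt _ (by omega))
  have hfib := Finset.card_eq_sum_card_fiberwise hmaps
  obtain ⟨a, ha, hamax⟩ := Finset.exists_max_image (Finset.range (n + 1))
    (fun a => (Uf.filter (fun x => vtSum x % (n + 1) = a)).card) ⟨0, by simp⟩
  have hsum : Uf.card ≤ (n + 1) * (Uf.filter (fun x => vtSum x % (n + 1) = a)).card := by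
    rw [hfib]
    calc ∑ b ∈ Finset.range (n + 1), (Uf.filter (fun x => vtSum x % (n + 1) = b)).card
        ≤ (Finset.range (n + 1)).card * (Uf.filter (fun x => vtSum x % (n + 1) = a)).card :=
          Finset.sum_le_card_nsmul _ _ _ (fun b hb => hamax b hb)
      _ = (n + 1) * _ := by rw [Finset.card_range]
  refine ⟨a, ?_⟩
  have ha' : a < n + 1 := Finset.mem_range.mp ha
  have hBVT : BVT n a = ↑(Uf.filter (fun x => vtSum x % (n + 1) = a)) := by
    ext x
    simp only [Finset.coe_filter, Set.mem_setOf_eq, hUf, Set.Finite.mem_toFinset]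
    constructor
    · rintro ⟨hb, hmod⟩
      refine ⟨hb, ?_⟩
      have := hmod
      unfold Nat.ModEq at this
      rwa [Nat.mod_eq_of_lt ha'] at this
    · rintro ⟨hb, hmod⟩
      refine ⟨hb, ?_⟩
      unfold Nat.ModEq
      rwa [Nat.mod_eq_of_lt ha']
  rw [hBVT, Set.ncard_coe_finset]
  calc n.choose (n / 2) = (Swords n (n / 2)).ncard := (Swords_ncard n (n / 2)).symm
    _ = Uf.card := Set.ncard_eq_toFinset_card _ hUfin
    _ ≤ (n + 1) * _ := hsum
-- Part K: real-valued estimates and the main theorem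

lemma logb_nat_le {n k : ℕ} (hk : k ≤ 2 ^ n) : Real.logb 2 (k : ℝ) ≤ (n : ℝ) := by
  rcases Nat.eq_zero_or_pos k with rfl | hpos
  · simp
  · have h1 : Real.logb 2 (k : ℝ) ≤ Real.logb 2 ((2 : ℝ) ^ n) := by
      apply Real.logb_le_logb_of_le one_lt_two (by exact_mod_cast hpos)
      exact_mod_cast hk
    rwa [Real.logb_pow, Real.logb_self_eq_one one_lt_two, mul_one] at h1

lemma rhoSet_bddBelow (n N : ℕ) :
    BddBelow {r : ℝ | ∃ C : Set (List Bool),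
      reconCode n N Bedit C ∧ r = (n : ℝ) - Real.logb 2 (C.ncard : ℝ)} := by
  refine ⟨0, ?_⟩
  rintro r ⟨C, hC, rfl⟩
  have h1 : C.ncard ≤ 2 ^ n := by
    calc C.ncard ≤ (Swords n (n / 2)).ncard :=
          Set.ncard_le_ncard hC.1 (Swords_finite _ _)
      _ = n.choose (n / 2) := Swords_ncard _ _
      _ ≤ 2 ^ n := choose_le_two_pow _ _
  have := logb_nat_le h1
  linarith

lemma rhoSet_nonempty (n N : ℕ) :
    Set.Nonempty {r : ℝ | ∃ C : Set (List Bool),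
      reconCode n N Bedit C ∧ r = (n : ℝ) - Real.logb 2 (C.ncard : ℝ)} := by
  refine ⟨(n : ℝ) - Real.logb 2 ((∅ : Set (List Bool)).ncard : ℝ), ∅, ⟨?_, ?_⟩, rfl⟩
  · exact Set.empty_subset _
  · intro x hx
    exact absurd hx (Set.notMem_empty x)

lemma logb_le_three_sqrt {n : ℕ} (hn : 1 ≤ n) : Real.logb 2 (n : ℝ) ≤ 3 * Real.sqrt n := by
  have hn1 : (1 : ℝ) ≤ (n : ℝ) := by exact_mod_cast hn
  have hs0 : 0 < Real.sqrt n := Real.sqrt_pos.mpr (by linarith)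
  have h1 : Real.log n ≤ 2 * Real.sqrt n := by
    have hsq : ((n : ℝ)) = (Real.sqrt n) ^ 2 := (Real.sq_sqrt (by linarith)).symm
    calc Real.log n = Real.log ((Real.sqrt n) ^ 2) := by rw [← hsq]
      _ = 2 * Real.log (Real.sqrt n) := by rw [Real.log_pow]; push_cast; ring
      _ ≤ 2 * (Real.sqrt n - 1) := by
          have := Real.log_le_sub_one_of_pos hs0
          linarith
      _ ≤ 2 * Real.sqrt n := by linarith
  have hlog2 : (0.6931471803 : ℝ) < Real.log 2 := Real.log_two_gt_d9
  have hlogn : 0 ≤ Real.log n := Real.log_nonneg hn1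
  rw [Real.logb, div_le_iff₀ (by linarith : (0:ℝ) < Real.log 2)]
  nlinarith [mul_nonneg hs0.le (show (0:ℝ) ≤ Real.log 2 - 0.6931471803 by linarith)]

lemma sqrt_le_div_eight {n : ℕ} (hn : 64 ≤ n) : Real.sqrt n ≤ (n : ℝ) / 8 := by
  have h64 : (64 : ℝ) ≤ n := by exact_mod_cast hn
  rw [show ((n : ℝ) / 8) = Real.sqrt (((n : ℝ) / 8) ^ 2) from
    (Real.sqrt_sq (by positivity)).symm]
  apply Real.sqrt_le_sqrt
  nlinarith

lemma three_half_logb_le {n : ℕ} (hn : 64 ≤ n) :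
    (3 / 2) * Real.logb 2 (n : ℝ) ≤ (n : ℝ) := by
  have h1 := logb_le_three_sqrt (show 1 ≤ n by omega)
  have h2 := sqrt_le_div_eight hn
  have h3 : (0:ℝ) ≤ n := by positivity
  nlinarith

lemma logb_succ_le {n : ℕ} (hn : 1 ≤ n) :
    Real.logb 2 ((n : ℝ) + 1) ≤ 1 + Real.logb 2 (n : ℝ) := by
  have hn1 : (1 : ℝ) ≤ (n : ℝ) := by exact_mod_cast hn
  have h1 : Real.logb 2 ((n : ℝ) + 1) ≤ Real.logb 2 (2 * (n : ℝ)) :=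
    Real.logb_le_logb_of_le one_lt_two (by linarith) (by linarith)
  rwa [Real.logb_mul (by norm_num) (by linarith), Real.logb_self_eq_one one_lt_two] at h1

lemma logb_le_logb_succ (n : ℕ) : Real.logb 2 (n : ℝ) ≤ Real.logb 2 ((n : ℝ) + 1) := by
  rcases Nat.eq_zero_or_pos n with rfl | hpos
  · simp
  · exact Real.logb_le_logb_of_le one_lt_two (by exact_mod_cast hpos) (by linarith)

/-- the lower bound for every member of the rho-set -/
lemma member_lower {n N : ℕ} (hev : Even n) (hn : 64 ≤ n) (hN1 : 1 ≤ N) (hN2 : N ≤ 2)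
    {C : Set (List Bool)} (hC : reconCode n N Bedit C) :
    (3 / 2) * Real.logb 2 (n : ℝ) - 2 ≤ (n : ℝ) - Real.logb 2 (C.ncard : ℝ) := by
  rcases Nat.eq_zero_or_pos C.ncard with h0 | hpos
  · rw [h0]
    simp only [Nat.cast_zero, Real.logb_zero, sub_zero]
    have := three_half_logb_le hn
    linarith
  · -- nat inequality
    have hm : 1 ≤ n / 2 := by omega
    have hnn : 2 * (n / 2) = n := by
      obtain ⟨k, hk⟩ := hev
      omega
    have hup : (n + 1) * (n.choose (n / 2))^2 ≤ 2 ^ (2 * n) := by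
      have h := central_upper (n / 2) hm
      rw [hnn] at h
      calc (n + 1) * (n.choose (n / 2))^2 ≤ 16 ^ (n / 2) := h
        _ = 2 ^ (2 * n) := by
            rw [show (16 : ℕ) = 2 ^ 4 from rfl, ← pow_mul]
            congr 1
            omega
    have hpack := packing_bound (by omega) hN2 hC
    have hnat : C.ncard ^ 2 * (n + 1) ^ 3 ≤ 9 * 2 ^ (2 * n) := by
      have h1 : ((n + 1) * C.ncard) ^ 2 ≤ (3 * n.choose (n / 2)) ^ 2 :=
        Nat.pow_le_pow_left hpack 2
      have h2 : C.ncard ^ 2 * (n + 1) ^ 3 = ((n + 1) * C.ncard) ^ 2 * (n + 1) := by ring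
      have h3 : (3 * n.choose (n / 2)) ^ 2 * (n + 1) = 9 * ((n + 1) * (n.choose (n/2))^2) := by
        ring
      calc C.ncard ^ 2 * (n + 1) ^ 3 = ((n + 1) * C.ncard) ^ 2 * (n + 1) := h2
        _ ≤ (3 * n.choose (n / 2)) ^ 2 * (n + 1) := Nat.mul_le_mul_right _ h1
        _ = 9 * ((n + 1) * (n.choose (n/2))^2) := h3
        _ ≤ 9 * 2 ^ (2 * n) := Nat.mul_le_mul_left _ hup
    -- real inequality
    have hreal : ((C.ncard : ℝ)) ^ 2 * ((n : ℝ) + 1) ^ 3 ≤ 9 * 2 ^ (2 * n) := by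
      exact_mod_cast hnat
    have hc1 : (1 : ℝ) ≤ (C.ncard : ℝ) := by exact_mod_cast hpos
    have hlhs : (0 : ℝ) < ((C.ncard : ℝ)) ^ 2 * ((n : ℝ) + 1) ^ 3 := by positivity
    have hlog := Real.logb_le_logb_of_le one_lt_two hlhs hreal
    rw [Real.logb_mul (by positivity) (by positivity), Real.logb_pow, Real.logb_pow,
      Real.logb_mul (by norm_num) (by positivity), Real.logb_pow,
      Real.logb_self_eq_one one_lt_two] at hlog
    have h9 : Real.logb 2 (9 : ℝ) ≤ 4 := by
      have : Real.logb 2 (9 : ℝ) ≤ Real.logb 2 (16 : ℝ) :=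
        Real.logb_le_logb_of_le one_lt_two (by norm_num) (by norm_num)
      have h16 : Real.logb 2 (16 : ℝ) = 4 := by
        rw [show (16 : ℝ) = 2 ^ (4 : ℕ) by norm_num, Real.logb_pow,
          Real.logb_self_eq_one one_lt_two]
        norm_num
      linarith
    have hmono := logb_le_logb_succ n
    push_cast at hlog
    linarith

/-- the upper bound: some BVT code is good -/
lemma rho_upper {n N : ℕ} (hev : Even n) (hn : 64 ≤ n) (hN1 : 1 ≤ N) :
    rho n N Bedit ≤ (3 / 2) * Real.logb 2 (n : ℝ) + 2 := by
  rw [rho]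
  obtain ⟨a, hbig⟩ := exists_bvt_large n
  have hmem : (n : ℝ) - Real.logb 2 ((BVT n a).ncard : ℝ) ∈
      {r : ℝ | ∃ C : Set (List Bool),
        reconCode n N Bedit C ∧ r = (n : ℝ) - Real.logb 2 (C.ncard : ℝ)} :=
    ⟨BVT n a, bvt_recon n N hN1 a, rfl⟩
  have hrho := csInf_le (rhoSet_bddBelow n N) hmem
  -- now bound the member
  have hm : 1 ≤ n / 2 := by omega
  have hnn : 2 * (n / 2) = n := by obtain ⟨k, hk⟩ := hev; omega
  have hchoosepos : 1 ≤ n.choose (n / 2) := Nat.choose_pos (by omega)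
  have hcpos : 1 ≤ (BVT n a).ncard := by
    by_contra h
    have : (BVT n a).ncard = 0 := by omega
    rw [this, Nat.mul_zero] at hbig
    omega
  have hlow : 2 ^ (2 * n) ≤ 2 * n * (n.choose (n / 2))^2 := by
    have := central_lower (n / 2) hm
    calc 2 ^ (2 * n) = 16 ^ (n / 2) := by
          rw [show (16 : ℕ) = 2 ^ 4 from rfl, ← pow_mul]
          congr 1
          omega
      _ ≤ 4 * (n / 2) * ((2 * (n/2)).choose (n/2))^2 := this
      _ ≤ 2 * n * (n.choose (n / 2))^2 := by
          rw [hnn]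
          exact Nat.mul_le_mul_right _ (by omega)
  have hnat : 2 ^ (2 * n) ≤ 2 * (n + 1)^3 * (BVT n a).ncard ^ 2 := by
    calc 2 ^ (2 * n) ≤ 2 * n * (n.choose (n / 2))^2 := hlow
      _ ≤ 2 * n * ((n + 1) * (BVT n a).ncard)^2 :=
          Nat.mul_le_mul_left _ (Nat.pow_le_pow_left hbig 2)
      _ ≤ 2 * (n + 1)^3 * (BVT n a).ncard ^ 2 := by
          have : 2 * n * ((n + 1) * (BVT n a).ncard)^2
              = (2 * n * (n+1)^2) * (BVT n a).ncard ^ 2 := by ring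
          rw [this]
          exact Nat.mul_le_mul_right _ (by nlinarith)
  have hreal : (2 : ℝ) ^ (2 * n) ≤ 2 * ((n : ℝ) + 1)^3 * ((BVT n a).ncard : ℝ) ^ 2 := by
    exact_mod_cast hnat
  have hc1 : (1 : ℝ) ≤ ((BVT n a).ncard : ℝ) := by exact_mod_cast hcpos
  have hlog := Real.logb_le_logb_of_le one_lt_two (by positivity) hreal
  rw [Real.logb_pow, Real.logb_self_eq_one one_lt_two,
    Real.logb_mul (by positivity) (by positivity),
    Real.logb_mul (by norm_num) (by positivity), Real.logb_pow, Real.logb_pow,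
    Real.logb_self_eq_one one_lt_two] at hlog
  have hsucc := logb_succ_le (show 1 ≤ n by omega)
  push_cast at hlog
  linarith

theorem main_bounds {n N : ℕ} (hev : Even n) (hn : 64 ≤ n) (hN1 : 1 ≤ N) (hN2 : N ≤ 2) :
    (3 / 2) * Real.logb 2 (n : ℝ) - 2 ≤ rho n N Bedit ∧
    rho n N Bedit ≤ (3 / 2) * Real.logb 2 (n : ℝ) + 2 := by
  constructor
  · apply le_csInf (rhoSet_nonempty n N)
    rintro r ⟨C, hC, rfl⟩
    exact member_lower hev hn hN1 hN2 hC
  · exact rho_upper hev hn hN1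

/-- Theorem: for `N ∈ {1,2}`, `ρ_b(n,N;B^edit) = (3/2)·log₂ n + Θ(1)`. -/
theorem stmt6 :
    ∃ c1 c2 : ℝ, ∃ n0 : ℕ, Even n0 ∧ ∀ n : ℕ, Even n → n0 ≤ n →
      ∀ N : ℕ, N = 1 ∨ N = 2 →
        (3 / 2) * Real.logb 2 (n : ℝ) + c1 ≤ rho n N Bedit ∧
        rho n N Bedit ≤ (3 / 2) * Real.logb 2 (n : ℝ) + c2 := by
  refine ⟨-2, 2, 64, by decide, ?_⟩
  intro n hev hn N hN
  have hN1 : 1 ≤ N := by omega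
  have hN2 : N ≤ 2 := by omega
  have h := main_bounds hev hn hN1 hN2
  constructor
  · have := h.1; linarith
  · exact h.2

end BRC
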